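/- Let H and D be complex Hilbert spaces, U a unitary operator on H, B : D → H a linear isometry, Γ a self-adjoint strict contraction on D with Γ ≥ 0, and T := U + B(Γ − I)B*U (a contraction). Define β := (I − Γ)^{1/2}(I + Γ)^{−1/2}, F₂(z) := B*(I + zU*)(I − zU*)⁻¹B, and θ(z) := B*(−T + zD_{T*}(I − zT*)⁻¹D_T)U*B for z in the open unit disc 𝔻. Then for every z ∈ 𝔻 the operator I − θ(z) is invertible and (I − θ(z))⁻¹ = (βF₂(z)β + I)/2. -/

import Mathlib

set_option synthInstance.maxHeartbeats 1000000
set_option maxHeartbeats 2000000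

open ContinuousLinearMap
open scoped NNReal

section Aux

variable {H D : Type*} [NormedAddCommGroup H] [InnerProductSpace ℂ H] [CompleteSpace H]
  [NormedAddCommGroup D] [InnerProductSpace ℂ D] [CompleteSpace D]

/-- An isometric CLM satisfies `B† ∘ B = 1`. -/
lemma aux_adj_comp (B : D →L[ℂ] H) (hB : ∀ x : D, ‖B x‖ = ‖x‖) :
    adjoint B ∘L B = 1 := by
  have h : ∀ x y : D, (inner ℂ (B x) (B y) : ℂ) = inner ℂ x y := fun x y =>
    LinearIsometry.inner_map_map ⟨B.toLinearMap, hB⟩ x y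
  ext x
  apply ext_inner_left ℂ
  intro v
  rw [ContinuousLinearMap.comp_apply, adjoint_inner_right, h, ContinuousLinearMap.one_apply]

/-- Conjugation of a nonneg operator by an arbitrary CLM is nonneg. -/
lemma aux_conj_nonneg (B : D →L[ℂ] H) {N : D →L[ℂ] D} (hN : (0 : D →L[ℂ] D) ≤ N) :
    (0 : H →L[ℂ] H) ≤ B ∘L N ∘L adjoint B := by
  rw [ContinuousLinearMap.nonneg_iff_isPositive] at hN ⊢
  simpa [adjoint_adjoint] using hN.adjoint_conj (adjoint B)

/-- Commuting with a unit implies commuting with its `Ring.inverse`. -/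
lemma aux_commute_ringInverse {A : Type*} [Ring A] {a b : A} (hb : IsUnit b)
    (h : Commute a b) : Commute a (Ring.inverse b) := by
  obtain ⟨u, rfl⟩ := hb
  rw [Ring.inverse_unit]
  exact h.units_inv_right

end Aux

theorem one_sub_characteristic_function_inverse
    {H D : Type*} [NormedAddCommGroup H] [InnerProductSpace ℂ H] [CompleteSpace H]
    [NormedAddCommGroup D] [InnerProductSpace ℂ D] [CompleteSpace D]
    (U : H →L[ℂ] H) (hU : U ∈ unitary (H →L[ℂ] H))
    (B : D →L[ℂ] H) (hB : ∀ x : D, ‖B x‖ = ‖x‖)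
    (Γ : D →L[ℂ] D) (hΓsa : IsSelfAdjoint Γ) (hΓpos : (0 : D →L[ℂ] D) ≤ Γ)
    (hΓ : ∀ x : D, x ≠ 0 → ‖Γ x‖ < ‖x‖)
    (T : H →L[ℂ] H) (hT : T = U + B ∘L (Γ - 1) ∘L adjoint B ∘L U)
    (β : D →L[ℂ] D) (hβ : β = CFC.sqrt (1 - Γ) * Ring.inverse (CFC.sqrt (1 + Γ)))
    (z : ℂ) (hz : ‖z‖ < 1)
    (F₂ : D →L[ℂ] D)
    (hF₂ : F₂ = adjoint B ∘L ((1 + z • adjoint U) * Ring.inverse (1 - z • adjoint U)) ∘L B)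
    (θ : D →L[ℂ] D)
    (hθ : θ = adjoint B ∘L
        (-T + z • (CFC.sqrt (1 - T * star T) ∘L Ring.inverse (1 - z • adjoint T) ∘L
          CFC.sqrt (1 - star T * T))) ∘L adjoint U ∘L B) :
    IsUnit (1 - θ) ∧
      Ring.inverse (1 - θ) = ((1 : ℂ) / 2) • (β * F₂ * β + 1) := by
  -- basic unitary facts
  have hU'U : adjoint U * U = 1 := by rw [← star_eq_adjoint]; exact hU.1
  have hUU' : U * adjoint U = 1 := by rw [← star_eq_adjoint]; exact hU.2
  have hUU'v : ∀ y, U (adjoint U y) = y := fun y => by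
    have := DFunLike.congr_fun hUU' y
    simpa [ContinuousLinearMap.mul_apply] using this
  have hU'Uv : ∀ y, adjoint U (U y) = y := fun y => by
    have := DFunLike.congr_fun hU'U y
    simpa [ContinuousLinearMap.mul_apply] using this
  -- isometry facts
  have hBB : adjoint B ∘L B = (1 : D →L[ℂ] D) := aux_adj_comp B hB
  have hBBv : ∀ x, adjoint B (B x) = x := fun x => by
    have := DFunLike.congr_fun hBB x
    simpa using this
  -- norms
  have hUnorm : ‖U‖ ≤ 1 := by
    have h := CStarRing.norm_star_mul_self (x := U)
    rw [hU.1] at h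
    have h1 : ‖(1 : H →L[ℂ] H)‖ ≤ 1 := by
      rw [ContinuousLinearMap.one_def]; exact ContinuousLinearMap.norm_id_le
    nlinarith [norm_nonneg U]
  have hU'norm : ‖adjoint U‖ ≤ 1 := by
    rw [← star_eq_adjoint]; rwa [norm_star]
  have hΓnorm : ‖Γ‖ ≤ 1 := by
    refine ContinuousLinearMap.opNorm_le_bound _ zero_le_one fun x => ?_
    rw [one_mul]
    by_cases hx : x = 0
    · simp [hx]
    · exact (hΓ x hx).le
  have hΓ1 : Γ ≤ 1 := (CStarAlgebra.norm_le_one_iff_of_nonneg Γ hΓpos).mp hΓnorm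
  have h1mΓ : (0 : D →L[ℂ] D) ≤ 1 - Γ := sub_nonneg.mpr hΓ1
  have h1pΓ : (0 : D →L[ℂ] D) ≤ 1 + Γ := by
    have : (0 : D →L[ℂ] D) ≤ 1 := zero_le_one
    exact add_nonneg this hΓpos
  -- the operator P = B (1-Γ) B*
  set P : H →L[ℂ] H := B ∘L (1 - Γ) ∘L adjoint B with hPdef
  have hTP : T = (1 - P) * U := by
    rw [hT]
    ext x
    simp [hPdef, ContinuousLinearMap.mul_apply, ContinuousLinearMap.comp_apply,
      ContinuousLinearMap.sub_apply, ContinuousLinearMap.add_apply, map_sub]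
    abel
  have hPpos : (0 : H →L[ℂ] H) ≤ P := aux_conj_nonneg B h1mΓ
  have hQpos : (0 : H →L[ℂ] H) ≤ 1 - B ∘L adjoint B := by
    have hQQ : (B ∘L adjoint B) * (B ∘L adjoint B) = B ∘L adjoint B := by
      ext x
      simp [ContinuousLinearMap.mul_apply, ContinuousLinearMap.comp_apply, hBBv]
    have hQsa : star (1 - B ∘L adjoint B) = 1 - B ∘L adjoint B := by
      simp [star_sub, star_eq_adjoint, adjoint_comp, adjoint_adjoint]
    have key : (1 - B ∘L adjoint B : H →L[ℂ] H) =
        star (1 - B ∘L adjoint B) * (1 - B ∘L adjoint B) := by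
      rw [hQsa]
      calc (1 - B ∘L adjoint B : H →L[ℂ] H)
          = 1 - (B ∘L adjoint B) - ((B ∘L adjoint B) - (B ∘L adjoint B) * (B ∘L adjoint B)) := by
            rw [hQQ]; abel
        _ = (1 - B ∘L adjoint B) * (1 - B ∘L adjoint B) := by noncomm_ring
    rw [key]
    exact star_mul_self_nonneg _
  have h1Ppos : (0 : H →L[ℂ] H) ≤ 1 - P := by
    have hsplit : (1 : H →L[ℂ] H) - P = (1 - B ∘L adjoint B) + B ∘L Γ ∘L adjoint B := by
      ext x
      simp [hPdef, ContinuousLinearMap.sub_apply, ContinuousLinearMap.add_apply,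
        ContinuousLinearMap.comp_apply, map_sub]
      abel
    rw [hsplit]
    exact add_nonneg hQpos (aux_conj_nonneg B hΓpos)
  have h1Pnorm : ‖(1 : H →L[ℂ] H) - P‖ ≤ 1 := by
    refine (CStarAlgebra.norm_le_one_iff_of_nonneg _ h1Ppos).mpr ?_
    calc (1 : H →L[ℂ] H) - P ≤ 1 - 0 := by exact sub_le_sub_left hPpos 1
      _ = 1 := by rw [sub_zero]
  have hTnorm : ‖T‖ ≤ 1 := by
    rw [hTP]
    calc ‖(1 - P) * U‖ ≤ ‖(1 : H →L[ℂ] H) - P‖ * ‖U‖ := norm_mul_le _ _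
      _ ≤ 1 * 1 := mul_le_mul h1Pnorm hUnorm (norm_nonneg _) zero_le_one
      _ = 1 := one_mul 1
  -- Neumann units
  have hzUnorm : ‖z • adjoint U‖ < 1 := by
    rw [norm_smul]
    calc ‖z‖ * ‖adjoint U‖ ≤ ‖z‖ * 1 := by
          exact mul_le_mul_of_nonneg_left hU'norm (norm_nonneg z)
      _ = ‖z‖ := mul_one _
      _ < 1 := hz
  have hzTnorm : ‖z • adjoint T‖ < 1 := by
    rw [norm_smul]
    have hadj : ‖adjoint T‖ ≤ 1 := by rw [← star_eq_adjoint, norm_star]; exact hTnorm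
    calc ‖z‖ * ‖adjoint T‖ ≤ ‖z‖ * 1 := mul_le_mul_of_nonneg_left hadj (norm_nonneg z)
      _ = ‖z‖ := mul_one _
      _ < 1 := hz
  have uU : IsUnit ((1 : H →L[ℂ] H) - z • adjoint U) := (Units.oneSub _ hzUnorm).isUnit
  have uT : IsUnit ((1 : H →L[ℂ] H) - z • adjoint T) := (Units.oneSub _ hzTnorm).isUnit
  set Rz : H →L[ℂ] H := Ring.inverse (1 - z • adjoint U) with hRzdef
  set Sz : H →L[ℂ] H := Ring.inverse (1 - z • adjoint T) with hSzdef
  have hRz1 : (1 - z • adjoint U) * Rz = 1 := Ring.mul_inverse_cancel _ uU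
  have hRz2 : Rz * (1 - z • adjoint U) = 1 := Ring.inverse_mul_cancel _ uU
  have hSz1 : (1 - z • adjoint T) * Sz = 1 := Ring.mul_inverse_cancel _ uT
  have hSz2 : Sz * (1 - z • adjoint T) = 1 := Ring.inverse_mul_cancel _ uT
  -- adjoint of T
  have hTadj : adjoint T = adjoint U * (1 - P) := by
    have hPsa : star P = P := by
      have hΓ' : adjoint ((1 : D →L[ℂ] D) - Γ) = 1 - Γ := by
        rw [← star_eq_adjoint, star_sub, star_one, hΓsa.star_eq]
      rw [star_eq_adjoint, hPdef, adjoint_comp, adjoint_comp, adjoint_adjoint, hΓ']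
      rfl
    rw [← star_eq_adjoint, hTP, star_mul, star_eq_adjoint, star_sub, star_one, hPsa]
  -- the Y machinery
  set W : H →L[ℂ] H := Rz * (z • adjoint U) with hWdef
  have hTz : (1 : H →L[ℂ] H) - z • adjoint T = (1 - z • adjoint U) + (z • adjoint U) * P := by
    rw [hTadj, mul_sub, mul_one, smul_sub, smul_mul_assoc]
    abel
  set Y : H →L[ℂ] H := 1 + W * P with hYdef
  have hYRzTz : Y = Rz * (1 - z • adjoint T) := by
    rw [hTz, mul_add, hRz2, hYdef, hWdef, mul_assoc]
  set Yi : H →L[ℂ] H := Sz * (1 - z • adjoint U) with hYidef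
  have hYY : Y * Yi = 1 := by
    rw [hYRzTz, hYidef, mul_assoc, ← mul_assoc (1 - z • adjoint T), hSz1, one_mul, hRz2]
  have hYY' : Yi * Y = 1 := by
    rw [hYRzTz, hYidef, mul_assoc, ← mul_assoc (1 - z • adjoint U), hRz1, one_mul, hSz2]
  -- D-level operators
  set K : D →L[ℂ] D := adjoint B ∘L (W ∘L B) with hKdef
  set G : D →L[ℂ] D := adjoint B ∘L ((Yi * W) ∘L B) with hGdef
  -- sandwich identities
  have hsand2 : ∀ m₁ m₂ : H →L[ℂ] H,
      (adjoint B ∘L (m₁ ∘L B)) * ((1 - Γ) * (adjoint B ∘L (m₂ ∘L B))) =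
        adjoint B ∘L ((m₁ * (P * m₂)) ∘L B) := by
    intro m₁ m₂
    ext x
    simp [ContinuousLinearMap.mul_apply, ContinuousLinearMap.comp_apply, hPdef]
  have hsandadd : ∀ m₁ m₂ : H →L[ℂ] H,
      adjoint B ∘L (m₁ ∘L B) + adjoint B ∘L (m₂ ∘L B) = adjoint B ∘L ((m₁ + m₂) ∘L B) := by
    intro m₁ m₂
    ext x
    simp [ContinuousLinearMap.comp_apply, ContinuousLinearMap.add_apply]
  -- the two key identities
  have hE1 : G * (1 + (1 - Γ) * K) = K := by
    have key : Yi * W + (Yi * W) * (P * W) = W := by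
      have e : Yi * W + (Yi * W) * (P * W) = Yi * ((1 + W * P) * W) := by noncomm_ring
      rw [e, ← hYdef, ← mul_assoc, hYY', one_mul]
    rw [mul_add, mul_one, hGdef, hKdef, hsand2, hsandadd, key]
  have hE2 : (1 + K * (1 - Γ)) * G = K := by
    have key : Yi * W + W * (P * (Yi * W)) = W := by
      have e : Yi * W + W * (P * (Yi * W)) = (1 + W * P) * (Yi * W) := by noncomm_ring
      rw [e, ← hYdef, ← mul_assoc, hYY, one_mul]
    rw [add_mul, one_mul, mul_assoc, hGdef, hKdef, hsand2, hsandadd, key]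
  -- F₂ = 1 + 2K
  have hcURz : Commute (adjoint U) Rz := by
    refine aux_commute_ringInverse uU ?_
    exact Commute.sub_right (Commute.one_right _) ((Commute.refl _).smul_right z)
  have hRzid : Rz = 1 + (z • adjoint U) * Rz := by
    have h := hRz1
    rw [sub_mul, one_mul, sub_eq_iff_eq_add] at h
    exact h
  have hzURzW : (z • adjoint U) * Rz = W := by
    rw [smul_mul_assoc, hcURz.eq, ← mul_smul_comm, hWdef]
  have hRzB : adjoint B ∘L (Rz ∘L B) = 1 + K := by
    conv_lhs => rw [hRzid, hzURzW]
    ext x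
    simp [ContinuousLinearMap.comp_apply, ContinuousLinearMap.add_apply, hBBv, hKdef]
  have hF₂K : F₂ = 1 + (2 : ℂ) • K := by
    have e : ((1 : H →L[ℂ] H) + z • adjoint U) = (2 : ℂ) • 1 - (1 - z • adjoint U) := by
      module
    have h2 : ((1 : H →L[ℂ] H) + z • adjoint U) * Rz = (2 : ℂ) • Rz - 1 := by
      rw [e, sub_mul, smul_mul_assoc, one_mul, hRz1]
    have split : adjoint B ∘L (((2 : ℂ) • Rz - 1) ∘L B) =
        (2 : ℂ) • (adjoint B ∘L (Rz ∘L B)) - 1 := by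
      ext x
      simp [ContinuousLinearMap.comp_apply, ContinuousLinearMap.sub_apply,
        ContinuousLinearMap.smul_apply, hBBv]
    rw [hF₂, h2, split, hRzB]
    module
  -- CFC facts about Γ
  have hspecR : ∀ x ∈ spectrum ℝ Γ, x ≤ 1 := by
    have h := (le_algebraMap_iff_spectrum_le (R := ℝ) (r := (1 : ℝ)) (a := Γ) hΓsa).mp
      (by simpa using hΓ1)
    simpa using h
  have hres : SpectrumRestricts Γ Real.toNNReal := SpectrumRestricts.nnreal_of_nonneg hΓpos
  have hspec1 : ∀ x ∈ spectrum ℝ≥0 Γ, x ≤ 1 := by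
    intro x hx
    have hx' : (x : ℝ) ∈ spectrum ℝ Γ := by
      rw [← hres.algebraMap_image]
      exact ⟨x, hx, rfl⟩
    exact_mod_cast hspecR _ hx'
  have hsub : cfc (fun x : ℝ≥0 => 1 - x) Γ = 1 - Γ := by
    have h := cfc_tsub (A := D →L[ℂ] D) (fun _ : ℝ≥0 => 1) (fun x => x) Γ
      (fun x hx => hspec1 x hx) hΓpos
    simpa [cfc_const_one ℝ≥0 Γ, cfc_id' ℝ≥0 Γ] using h
  have hadd : cfc (fun x : ℝ≥0 => 1 + x) Γ = 1 + Γ := by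
    have h := cfc_add (R := ℝ≥0) (a := Γ) (fun _ => 1) (fun x => x)
    simpa [cfc_const_one ℝ≥0 Γ, cfc_id' ℝ≥0 Γ] using h
  set D' : D →L[ℂ] D := CFC.sqrt (1 - Γ) with hD'def
  set Cs : D →L[ℂ] D := CFC.sqrt (1 + Γ) with hCsdef
  have hD'cfc : D' = cfc (fun x : ℝ≥0 => NNReal.sqrt (1 - x)) Γ := by
    rw [hD'def, CFC.sqrt_eq_cfc, ← hsub, ← cfc_comp' NNReal.sqrt (fun x : ℝ≥0 => 1 - x) Γ]
  have hCscfc : Cs = cfc (fun x : ℝ≥0 => NNReal.sqrt (1 + x)) Γ := by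
    rw [hCsdef, CFC.sqrt_eq_cfc, ← hadd, ← cfc_comp' NNReal.sqrt (fun x : ℝ≥0 => 1 + x) Γ]
  have hcomm_D'Cs : Commute D' Cs := by
    rw [hD'cfc, hCscfc]; exact cfc_commute_cfc _ _ Γ
  have hcomm_D'Γ : Commute D' Γ := by
    have := cfc_commute_cfc (R := ℝ≥0) (fun x : ℝ≥0 => NNReal.sqrt (1 - x)) id Γ
    rw [cfc_id ℝ≥0 Γ, ← hD'cfc] at this
    exact this
  have hcomm_CsΓ : Commute Cs Γ := by
    have := cfc_commute_cfc (R := ℝ≥0) (fun x : ℝ≥0 => NNReal.sqrt (1 + x)) id Γ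
    rw [cfc_id ℝ≥0 Γ, ← hCscfc] at this
    exact this
  have hD'sq : D' * D' = 1 - Γ := CFC.sqrt_mul_sqrt_self _ h1mΓ
  have hCssq : Cs * Cs = 1 + Γ := CFC.sqrt_mul_sqrt_self _ h1pΓ
  have hD'pos : (0 : D →L[ℂ] D) ≤ D' := CFC.sqrt_nonneg _
  have hCspos : (0 : D →L[ℂ] D) ≤ Cs := CFC.sqrt_nonneg _
  set N : D →L[ℂ] D := D' * Cs with hNdef
  have hNpos : (0 : D →L[ℂ] D) ≤ N := by
    rw [hNdef, hD'cfc, hCscfc, ← cfc_mul _ _ Γ]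
    exact cfc_predicate _ Γ
  have hNsq : N * N = (1 - Γ) * (1 + Γ) := by
    rw [hNdef, mul_assoc, ← mul_assoc Cs, ← hcomm_D'Cs.eq, mul_assoc, ← mul_assoc, hD'sq, hCssq]
  -- inverses
  have hu1Γ : IsUnit ((1 : D →L[ℂ] D) + Γ) :=
    CStarAlgebra.isUnit_of_le 1 (le_add_of_nonneg_right hΓpos) isStrictlyPositive_one
  set J : D →L[ℂ] D := Ring.inverse (1 + Γ) with hJdef
  have hJ1 : (1 + Γ) * J = 1 := Ring.mul_inverse_cancel _ hu1Γ
  have hJ2 : J * (1 + Γ) = 1 := Ring.inverse_mul_cancel _ hu1Γ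
  have hCsunit : IsUnit Cs := by
    have hcomm_CsJ : Commute Cs J :=
      aux_commute_ringInverse hu1Γ (Commute.add_right (Commute.one_right _) hcomm_CsΓ)
    refine ⟨⟨Cs, Cs * J, ?_, ?_⟩, rfl⟩
    · rw [← mul_assoc, hCssq, hJ1]
    · rw [hcomm_CsJ.eq, mul_assoc, hCssq, hJ2]
  set Ci : D →L[ℂ] D := Ring.inverse Cs with hCidef
  have hCsCi : Cs * Ci = 1 := Ring.mul_inverse_cancel _ hCsunit
  have hCiCs : Ci * Cs = 1 := Ring.inverse_mul_cancel _ hCsunit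
  have hcomm_D'Ci : Commute D' Ci := aux_commute_ringInverse hCsunit hcomm_D'Cs
  have hCiCi : Ci * Ci = J := by
    have h : (1 + Γ) * (Ci * Ci) = 1 := by
      rw [← hCssq, mul_assoc, ← mul_assoc Cs Ci Ci, hCsCi, one_mul, hCsCi]
    calc Ci * Ci = 1 * (Ci * Ci) := (one_mul _).symm
      _ = (J * (1 + Γ)) * (Ci * Ci) := by rw [hJ2]
      _ = J * ((1 + Γ) * (Ci * Ci)) := by rw [mul_assoc]
      _ = J := by rw [h, mul_one]
  have hβ' : β = D' * Ci := hβ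
  -- β and N identities
  have hβsq : β * β = (1 - Γ) * J := by
    rw [hβ', mul_assoc, ← mul_assoc Ci D' Ci, ← hcomm_D'Ci.eq, mul_assoc, ← mul_assoc,
      hD'sq, hCiCi]
  have hN1 : (1 + Γ) * β = N := by
    have hcomm_D'1Γ : Commute (1 + Γ) D' := (Commute.add_left (Commute.one_left _)
      hcomm_D'Γ.symm)
    rw [hβ', ← mul_assoc, hcomm_D'1Γ.eq, mul_assoc, ← hCssq, mul_assoc, hCsCi, mul_one, hNdef]
  have hcomm_βΓ : Commute β Γ := by
    rw [hβ']
    exact Commute.mul_left hcomm_D'Γ (aux_commute_ringInverse hCsunit hcomm_CsΓ.symm).symm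
  have hN2 : β * (1 + Γ) = N := by
    rw [(Commute.add_right (Commute.one_right β) hcomm_βΓ).eq, hN1]
  have hNβ : N * β = 1 - Γ := by
    rw [hNdef, hβ', mul_assoc, ← mul_assoc Cs D' Ci, ← hcomm_D'Cs.eq, mul_assoc D' Cs Ci,
      hCsCi, mul_one, hD'sq]
  have hβN : β * N = 1 - Γ := by
    rw [hβ', hNdef, mul_assoc, ← mul_assoc Ci D' Cs, ← hcomm_D'Ci.eq, mul_assoc D' Ci Cs,
      hCiCs, mul_one, hD'sq]
  have hNJ : N * J = β := by
    rw [hNdef, ← hCiCi, mul_assoc, ← mul_assoc Cs Ci Ci, hCsCi, one_mul, ← hβ']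
  have hcomm_D'J : Commute D' J :=
    aux_commute_ringInverse hu1Γ (Commute.add_right (Commute.one_right _) hcomm_D'Γ)
  have hcomm_CsJ : Commute Cs J :=
    aux_commute_ringInverse hu1Γ (Commute.add_right (Commute.one_right _) hcomm_CsΓ)
  have hJN : J * N = β := by
    rw [← (Commute.mul_left hcomm_D'J hcomm_CsJ).eq, hNJ]
  -- identify the defect operators
  have hNsqv : ∀ y, N (N y) = ((1 - Γ) * (1 + Γ)) y := fun y => by
    have := DFunLike.congr_fun hNsq y
    simpa [ContinuousLinearMap.mul_apply] using this
  have hstarT : star T = adjoint U * (1 - P) := by rw [star_eq_adjoint]; exact hTadj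
  have h1PP : (1 : H →L[ℂ] H) - (1 - P) * (1 - P) = B ∘L (((1 - Γ) * (1 + Γ)) ∘L adjoint B) := by
    have e1 : (1 : H →L[ℂ] H) - (1 - P) * (1 - P) = P + P - P * P := by noncomm_ring
    have e2 : ((1 - Γ) + (1 - Γ) - (1 - Γ) * (1 - Γ) : D →L[ℂ] D) = (1 - Γ) * (1 + Γ) := by
      noncomm_ring
    rw [e1, ← e2]
    ext x
    simp [hPdef, ContinuousLinearMap.comp_apply, ContinuousLinearMap.mul_apply,
      ContinuousLinearMap.sub_apply, ContinuousLinearMap.add_apply, hBBv, map_sub, map_add]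
  have hTTstar : (1 : H →L[ℂ] H) - T * star T
      = B ∘L (((1 - Γ) * (1 + Γ)) ∘L adjoint B) := by
    rw [hstarT, hTP]
    have e : (1 - P) * U * (adjoint U * (1 - P)) = (1 - P) * (1 - P) := by
      rw [mul_assoc, ← mul_assoc U, hUU', one_mul]
    rw [e, h1PP]
  have hDst : CFC.sqrt ((1 : H →L[ℂ] H) - T * star T) = B ∘L (N ∘L adjoint B) := by
    refine CFC.sqrt_unique ?_ (aux_conj_nonneg B hNpos)
    rw [hTTstar]
    ext x
    simp [ContinuousLinearMap.comp_apply, ContinuousLinearMap.mul_apply, hBBv, hNsqv]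
  have hstarTT : (1 : H →L[ℂ] H) - star T * T
      = adjoint U ∘L ((B ∘L (((1 - Γ) * (1 + Γ)) ∘L adjoint B)) ∘L U) := by
    have e0 : (1 : H →L[ℂ] H) - star T * T = adjoint U * ((1 - (1 - P) * (1 - P)) * U) := by
      rw [hstarT, hTP]
      have h1 : adjoint U * (((1 : H →L[ℂ] H) - (1 - P) * (1 - P)) * U)
          = adjoint U * U - adjoint U * ((1 - P) * ((1 - P) * U)) := by noncomm_ring
      rw [h1, hU'U]
      noncomm_ring
    rw [e0, h1PP]
    ext x
    simp [ContinuousLinearMap.comp_apply, ContinuousLinearMap.mul_apply]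
  have hDt : CFC.sqrt ((1 : H →L[ℂ] H) - star T * T)
      = adjoint U ∘L ((B ∘L (N ∘L adjoint B)) ∘L U) := by
    have hpos0 : (0 : H →L[ℂ] H) ≤ B ∘L (N ∘L adjoint B) := aux_conj_nonneg B hNpos
    have hpos : (0 : H →L[ℂ] H) ≤ adjoint U ∘L ((B ∘L (N ∘L adjoint B)) ∘L U) := by
      have h := aux_conj_nonneg (adjoint U) hpos0
      rw [adjoint_adjoint] at h
      have e : adjoint U ∘L (B ∘L (N ∘L adjoint B)) ∘L U
          = adjoint U ∘L ((B ∘L (N ∘L adjoint B)) ∘L U) := by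
        ext x; simp [ContinuousLinearMap.comp_apply]
      rwa [e] at h
    refine CFC.sqrt_unique ?_ hpos
    rw [hstarTT]
    ext x
    simp [ContinuousLinearMap.comp_apply, ContinuousLinearMap.mul_apply, hBBv, hNsqv, hUU'v]
  -- rewrite θ
  have hYiW : Yi * W = Sz * (z • adjoint U) := by
    rw [hYidef, hWdef, mul_assoc, ← mul_assoc (1 - z • adjoint U), hRz1, one_mul]
  have hθ' : θ = -Γ + N * G * N := by
    rw [hθ, hDst, hDt]
    ext x
    simp [hGdef, hYiW, ContinuousLinearMap.comp_apply, ContinuousLinearMap.mul_apply,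
      ContinuousLinearMap.add_apply, ContinuousLinearMap.sub_apply,
      ContinuousLinearMap.smul_apply, ContinuousLinearMap.neg_apply, hTP, hPdef,
      hBBv, hUU'v, hU'Uv, map_smul, map_sub, map_add]
  -- final assembly
  have hθfinal : (1 : D →L[ℂ] D) - θ = (1 + Γ) - N * G * N := by
    rw [hθ']; abel
  set Sop : D →L[ℂ] D := J + β * K * β with hSopdef
  have hright : ((1 + Γ) - N * G * N) * Sop = 1 := by
    have expand : ((1 + Γ) - N * G * N) * Sop
        = (1 + Γ) * J + ((1 + Γ) * β) * (K * β) - (N * G) * (N * J)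
          - (N * G) * ((N * β) * (K * β)) := by rw [hSopdef]; noncomm_ring
    rw [expand, hJ1, hN1, hNJ, hNβ]
    have e4 : (1 : D →L[ℂ] D) + N * (K * β) - (N * G) * β - (N * G) * ((1 - Γ) * (K * β))
        = 1 + N * ((K - G * (1 + (1 - Γ) * K)) * β) := by noncomm_ring
    rw [e4, hE1, sub_self, zero_mul, mul_zero, add_zero]
  have hleft : Sop * ((1 + Γ) - N * G * N) = 1 := by
    have expand : Sop * ((1 + Γ) - N * G * N)
        = J * (1 + Γ) + (β * K) * (β * (1 + Γ)) - (J * N) * (G * N)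
          - (β * K) * ((β * N) * (G * N)) := by rw [hSopdef]; noncomm_ring
    rw [expand, hJ2, hN2, hJN, hβN]
    have e4 : (1 : D →L[ℂ] D) + (β * K) * N - β * (G * N) - (β * K) * ((1 - Γ) * (G * N))
        = 1 + β * ((K - (1 + K * (1 - Γ)) * G) * N) := by noncomm_ring
    rw [e4, hE2, sub_self, zero_mul, mul_zero, add_zero]
  have hval : (1 - θ) * Sop = 1 := by rw [hθfinal]; exact hright
  have hval' : Sop * (1 - θ) = 1 := by rw [hθfinal]; exact hleft
  refine ⟨⟨⟨1 - θ, Sop, hval, hval'⟩, rfl⟩, ?_⟩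
  have hinv : Ring.inverse (1 - θ) = Sop :=
    Ring.inverse_unit (⟨1 - θ, Sop, hval, hval'⟩ : (D →L[ℂ] D)ˣ)
  rw [hinv, hF₂K]
  have hexp : β * (1 + (2 : ℂ) • K) * β + 1 = β * β + (2 : ℂ) • (β * K * β) + 1 := by
    rw [mul_add, mul_one, add_mul, mul_smul_comm, smul_mul_assoc]
  rw [hexp, hβsq]
  have h2J : ((1 : D →L[ℂ] D) - Γ) * J + 1 = (2 : ℂ) • J := by
    have e : ((1 : D →L[ℂ] D) - Γ) + (1 + Γ) = (2 : ℂ) • 1 := by module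
    have h : ((1 : D →L[ℂ] D) - Γ) * J + (1 + Γ) * J = (2 : ℂ) • J := by
      rw [← add_mul, e, smul_mul_assoc, one_mul]
    rwa [hJ1] at h
  have e5 : ((1 : D →L[ℂ] D) - Γ) * J + (2 : ℂ) • (β * K * β) + 1
      = (2 : ℂ) • J + (2 : ℂ) • (β * K * β) := by
    rw [← h2J]; module
  rw [e5, hSopdef]
  module
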